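/- Let f: ℝⁿ → ℝⁿ be L_f-Lipschitz, g: ℝᵐ → ℝⁿ bounded by M_g, and let y, ȳ be two solutions of y' = f(y) + μ g(x(t)) and ȳ' = f(ȳ) + μ g(x̄(t)) respectively on [θ, θ+τ]. If ‖∫_θ^{θ+τ}[g(x(s)) - g(x̄(s))] ds‖ > C, then max_{t ∈ [θ, θ+τ]} ‖y(t) - ȳ(t)‖ > |μ| C / (2 + τ L_f). -/

import Mathlib

/-- If the integrals of the forcings differ by more than `C` over `[θ, θ+τ]`, then two
solutions of the correspondingly forced systems separate by more than
`|μ| C / (2 + τ L_f)` somewhere on `[θ, θ+τ]`. -/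
theorem forced_solutions_separate
    {m n : ℕ}
    (f : EuclideanSpace ℝ (Fin n) → EuclideanSpace ℝ (Fin n))
    (g : EuclideanSpace ℝ (Fin m) → EuclideanSpace ℝ (Fin n))
    (Lf : ℝ) (hLf : 0 < Lf) (hf : LipschitzWith (Real.toNNReal Lf) f)
    (Mg : ℝ) (hMg : 0 < Mg) (hg : ∀ x, ‖g x‖ ≤ Mg)
    (μ : ℝ) (hμ : μ ≠ 0)
    (x xb : ℝ → EuclideanSpace ℝ (Fin m)) (hx : Continuous x) (hxb : Continuous xb)
    (θ τ : ℝ) (hτ : 0 < τ)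
    (y yb : ℝ → EuclideanSpace ℝ (Fin n))
    (hy : ∀ t ∈ Set.Icc θ (θ + τ), HasDerivAt y (f (y t) + μ • g (x t)) t)
    (hyb : ∀ t ∈ Set.Icc θ (θ + τ), HasDerivAt yb (f (yb t) + μ • g (xb t)) t)
    (C : ℝ) (hC : 0 < C)
    (hint : C < ‖∫ s in θ..(θ + τ), (g (x s) - g (xb s))‖) :
    ∃ t ∈ Set.Icc θ (θ + τ), |μ| * C / (2 + τ * Lf) < ‖y t - yb t‖ := by
  by_contra h
  push_neg at h
  set K := |μ| * C / (2 + τ * Lf) with hK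
  have hθτ : θ ≤ θ + τ := by linarith
  have hden : (0:ℝ) < 2 + τ * Lf := by positivity
  have hμpos : 0 < |μ| := abs_pos.mpr hμ
  set D : ℝ → EuclideanSpace ℝ (Fin n) := fun s => g (x s) - g (xb s) with hDdef
  have hD : IntervalIntegrable D MeasureTheory.volume θ (θ + τ) := by
    by_contra hND
    rw [intervalIntegral.integral_undef hND] at hint
    simp at hint
    linarith
  have hyc : ContinuousOn y (Set.Icc θ (θ+τ)) := fun t ht =>
    ((hy t ht).continuousAt).continuousWithinAt
  have hybc : ContinuousOn yb (Set.Icc θ (θ+τ)) := fun t ht =>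
    ((hyb t ht).continuousAt).continuousWithinAt
  set F : ℝ → EuclideanSpace ℝ (Fin n) := fun t => f (y t) - f (yb t) with hFdef
  have hFc : ContinuousOn F (Set.Icc θ (θ+τ)) :=
    (hf.continuous.comp_continuousOn hyc).sub (hf.continuous.comp_continuousOn hybc)
  have hFi : IntervalIntegrable F MeasureTheory.volume θ (θ+τ) := by
    apply ContinuousOn.intervalIntegrable
    rwa [Set.uIcc_of_le hθτ]
  have hw : ∀ t ∈ Set.uIcc θ (θ+τ), HasDerivAt (fun t => y t - yb t) (F t + μ • D t) t := by
    intro t ht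
    rw [Set.uIcc_of_le hθτ] at ht
    have h2 := (hy t ht).sub (hyb t ht)
    refine h2.congr_deriv ?_
    simp only [hFdef, hDdef, smul_sub]
    abel
  have hwi : IntervalIntegrable (fun t => F t + μ • D t) MeasureTheory.volume θ (θ+τ) :=
    hFi.add (hD.smul μ)
  have key := intervalIntegral.integral_eq_sub_of_hasDerivAt hw hwi
  rw [intervalIntegral.integral_add (g := fun t => μ • D t) hFi (hD.smul μ), intervalIntegral.integral_smul] at key
  have hK0 : 0 ≤ K := by positivity
  have hbF : ‖∫ t in θ..(θ+τ), F t‖ ≤ Lf * K * τ := by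
    have hb := intervalIntegral.norm_integral_le_of_norm_le_const (C := Lf * K)
      (f := F) (a := θ) (b := θ + τ) ?_
    · have : |θ + τ - θ| = τ := by rw [abs_of_pos]; ring; linarith
      rw [this] at hb
      exact hb
    · intro t ht
      rw [Set.uIoc_of_le hθτ] at ht
      have htI : t ∈ Set.Icc θ (θ+τ) := ⟨le_of_lt ht.1, ht.2⟩
      have hlip : ‖F t‖ ≤ Lf * ‖y t - yb t‖ := by
        have h3 := hf.dist_le_mul (y t) (yb t)
        rw [dist_eq_norm, dist_eq_norm, Real.coe_toNNReal _ hLf.le] at h3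
        exact h3
      have := h t htI
      nlinarith
  have hend : ‖y (θ+τ) - yb (θ+τ)‖ ≤ K := h (θ+τ) ⟨hθτ, le_refl _⟩
  have h0 : ‖y θ - yb θ‖ ≤ K := h θ ⟨le_refl _, hθτ⟩
  have hsm : μ • (∫ t in θ..(θ+τ), D t) =
      ((fun t => y t - yb t) (θ+τ) - (fun t => y t - yb t) θ) - ∫ t in θ..(θ+τ), F t := by
    rw [← key]; abel
  have hnorm : |μ| * ‖∫ t in θ..(θ+τ), D t‖ ≤ K + K + Lf * K * τ := by
    have : ‖μ • (∫ t in θ..(θ+τ), D t)‖ ≤ K + K + Lf * K * τ := by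
      rw [hsm]
      calc ‖((fun t => y t - yb t) (θ+τ) - (fun t => y t - yb t) θ) - ∫ t in θ..(θ+τ), F t‖
          ≤ ‖(fun t => y t - yb t) (θ+τ) - (fun t => y t - yb t) θ‖ + ‖∫ t in θ..(θ+τ), F t‖ :=
            norm_sub_le _ _
        _ ≤ (‖y (θ+τ) - yb (θ+τ)‖ + ‖y θ - yb θ‖) + ‖∫ t in θ..(θ+τ), F t‖ := by
            gcongr; exact norm_sub_le _ _
        _ ≤ K + K + Lf * K * τ := by linarith
    rwa [norm_smul, Real.norm_eq_abs] at this
  have hKeq : (2 + τ * Lf) * K = |μ| * C := by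
    rw [hK]; field_simp
  have hgt : |μ| * C < |μ| * ‖∫ t in θ..(θ+τ), D t‖ := by
    apply mul_lt_mul_of_pos_left _ hμpos
    exact hint
  nlinarith
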